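/- arXiv:2604.19641 — 5 statements merged into one kernel-verified Lean document; each statement's English description precedes it below -/
import Mathlib

section
/- Suppose α > max_{r∈R} q(r) and the function y*(r) = λ·P(r)/(α − q(r)) satisfies ∑_{r∈R} y*(r) = 1, so that y* is a probability mass function with full support. Then y* maximizes the regularized objective: for every probability mass function z on R with z(r) > 0 for all r, F(z) ≤ F(y*), with equality if and only if z = y*. -/
/-- If `α > max q` and `y*(r) = λ·P(r)/(α − q(r))` sums to 1, then `y*` is a
full-support probability mass function maximizing the regularized objective `F`, with
equality `F(z) = F(y*)` iff `z = y*`. -/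
theorem stmt2 {R : Type*} [Fintype R] [Nonempty R]
    (P : R → ℝ) (hPpos : ∀ r, 0 < P r) (hPsum : ∑ r, P r = 1)
    (q : R → ℝ) (lam : ℝ) (hlam : 0 < lam)
    (F : (R → ℝ) → ℝ)
    (hF : ∀ y : R → ℝ,
      F y = (∑ r, q r * y r) - lam * ∑ r, P r * Real.log (P r / y r))
    (α : ℝ) (hα : Finset.univ.sup' Finset.univ_nonempty q < α)
    (ystar : R → ℝ) (hystar : ∀ r, ystar r = lam * P r / (α - q r))
    (hystarsum : ∑ r, ystar r = 1)
    (z : R → ℝ) (hzpos : ∀ r, 0 < z r) (hzsum : ∑ r, z r = 1) :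
    F z ≤ F ystar ∧ (F z = F ystar ↔ z = ystar) := by
  have hqα : ∀ r, q r < α := fun r =>
    lt_of_le_of_lt (Finset.le_sup' q (Finset.mem_univ r)) hα
  have hypos : ∀ r, 0 < ystar r := fun r => by
    rw [hystar r]
    exact div_pos (mul_pos hlam (hPpos r)) (sub_pos.2 (hqα r))
  have e1 : ∀ r, q r = α - lam * P r / ystar r := by
    intro r
    have h1 : (α - q r) ≠ 0 := sub_ne_zero.2 (hqα r).ne'
    have hne : lam * P r ≠ 0 := (mul_pos hlam (hPpos r)).ne'
    rw [hystar r]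
    field_simp
    rw [mul_div_cancel_left₀ _ (hPpos r).ne']
    ring
  have keypt : ∀ r,
      q r * (ystar r - z r) +
        lam * (P r * Real.log (P r / z r) - P r * Real.log (P r / ystar r))
      = α * (ystar r - z r) +
        lam * (P r * (z r / ystar r - 1 - Real.log (z r / ystar r))) := by
    intro r
    have hy := hypos r
    have hz := hzpos r
    have hP := hPpos r
    rw [e1 r, Real.log_div hP.ne' hz.ne', Real.log_div hP.ne' hy.ne',
      Real.log_div hz.ne' hy.ne']
    field_simp
    ring
  have H : ∑ r, (q r * (ystar r - z r) +
        lam * (P r * Real.log (P r / z r) - P r * Real.log (P r / ystar r)))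
      = ∑ r, (α * (ystar r - z r) +
        lam * (P r * (z r / ystar r - 1 - Real.log (z r / ystar r)))) :=
    Finset.sum_congr rfl fun r _ => keypt r
  simp only [Finset.sum_add_distrib, ← Finset.mul_sum, Finset.sum_sub_distrib,
    mul_sub] at H
  rw [hystarsum, hzsum] at H
  have key : F ystar - F z
      = lam * ∑ r, P r * (z r / ystar r - 1 - Real.log (z r / ystar r)) := by
    have h2 : ∑ r, P r * (z r / ystar r - 1 - Real.log (z r / ystar r))
        = (∑ r, P r * (z r / ystar r)) - (∑ r, P r * 1)
          - ∑ r, P r * Real.log (z r / ystar r) := by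
      simp [mul_sub, Finset.sum_sub_distrib]
    rw [hF z, hF ystar, h2]
    linear_combination H
  have hterm : ∀ r ∈ Finset.univ,
      0 ≤ P r * (z r / ystar r - 1 - Real.log (z r / ystar r)) := by
    intro r _
    have ht : 0 < z r / ystar r := div_pos (hzpos r) (hypos r)
    have := Real.log_le_sub_one_of_pos ht
    nlinarith [hPpos r]
  have hSnn : 0 ≤ ∑ r, P r * (z r / ystar r - 1 - Real.log (z r / ystar r)) :=
    Finset.sum_nonneg hterm
  constructor
  · nlinarith
  constructor
  · intro hFe
    have hS0 : ∑ r, P r * (z r / ystar r - 1 - Real.log (z r / ystar r)) = 0 := by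
      have : lam * ∑ r, P r * (z r / ystar r - 1 - Real.log (z r / ystar r)) = 0 := by
        rw [← key, hFe]; ring
      exact (mul_eq_zero.1 this).resolve_left hlam.ne'
    have := (Finset.sum_eq_zero_iff_of_nonneg hterm).1 hS0
    funext r
    have h0 := this r (Finset.mem_univ r)
    have ht : 0 < z r / ystar r := div_pos (hzpos r) (hypos r)
    have h1 : z r / ystar r - 1 - Real.log (z r / ystar r) = 0 := by
      rcases mul_eq_zero.1 h0 with h | h
      · exact absurd h (hPpos r).ne'
      · exact h
    have ht1 : z r / ystar r = 1 := by
      by_contra hne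
      have := Real.log_lt_sub_one_of_pos ht hne
      linarith
    have := (div_eq_one_iff_eq (hypos r).ne').1 ht1
    exact this
  · rintro rfl
    rfl
end

section
/- Suppose α > max_{r∈R} q(r) and y*(r) = λ·P(r)/(α − q(r)) satisfies ∑_{r∈R} y*(r) = 1. Then the value attained at y* is F(y*) = α − λ − λ·∑_{r∈R} P(r)·log((α − q(r))/λ). -/
/-- If `α > max q` and `y*(r) = λ·P(r)/(α − q(r))` sums to 1, then the value
attained at `y*` is `F(y*) = α − λ − λ·∑ r, P(r)·log((α − q(r))/λ)`. -/
theorem stmt3 {R : Type*} [Fintype R] [Nonempty R]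
    (P : R → ℝ) (hPpos : ∀ r, 0 < P r) (hPsum : ∑ r, P r = 1)
    (q : R → ℝ) (lam : ℝ) (hlam : 0 < lam)
    (F : (R → ℝ) → ℝ)
    (hF : ∀ y : R → ℝ,
      F y = (∑ r, q r * y r) - lam * ∑ r, P r * Real.log (P r / y r))
    (α : ℝ) (hα : Finset.univ.sup' Finset.univ_nonempty q < α)
    (ystar : R → ℝ) (hystar : ∀ r, ystar r = lam * P r / (α - q r))
    (hystarsum : ∑ r, ystar r = 1) :
    F ystar = α - lam - lam * ∑ r, P r * Real.log ((α - q r) / lam) := by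
  have hpos : ∀ r, 0 < α - q r := fun r =>
    sub_pos.2 (lt_of_le_of_lt (Finset.le_sup' q (Finset.mem_univ r)) hα)
  have hratio : ∀ r, P r / ystar r = (α - q r) / lam := by
    intro r
    rw [hystar r]
    rw [div_div_eq_mul_div, mul_comm lam (P r), mul_div_mul_left _ _ (hPpos r).ne']
  have hterm : ∀ r, q r * ystar r = α * ystar r - lam * P r := by
    intro r
    rw [hystar r]
    field_simp [(hpos r).ne']
    ring
  have h1 : (∑ r, q r * ystar r) = α - lam := by
    simp only [hterm]
    rw [Finset.sum_sub_distrib, ← Finset.mul_sum, ← Finset.mul_sum, hystarsum, hPsum]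
    ring
  rw [hF]
  simp only [hratio]
  rw [h1]
end

section
/- For every probability mass function x on H, the regularized objective satisfies G(x) ≤ τ·log(∑_{h∈H} P_H(h)·exp(U(h)/τ)). -/
/-- For every probability mass function `x` on `H`, the regularized objective
`G(x) = ∑ h, U(h)·x(h) − τ·KL(x‖P_H)` satisfies
`G(x) ≤ τ·log (∑ h, P_H(h)·exp (U(h)/τ))`, where
`KL(x‖P_H) = ∑_{h : x(h) > 0} x(h)·log (x(h)/P_H(h))`. -/
theorem stmt4 {H : Type*} [Fintype H] [Nonempty H]
    (PH : H → ℝ) (hPHpos : ∀ h, 0 < PH h) (hPHsum : ∑ h, PH h = 1)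
    (U : H → ℝ) (τ : ℝ) (hτ : 0 < τ)
    (x : H → ℝ) (hxnonneg : ∀ h, 0 ≤ x h) (hxsum : ∑ h, x h = 1) :
    (∑ h, U h * x h) -
        τ * ∑ h ∈ Finset.univ.filter (fun h => 0 < x h),
              x h * Real.log (x h / PH h) ≤
      τ * Real.log (∑ h, PH h * Real.exp (U h / τ)) := by
  classical
  set s : Finset H := Finset.univ.filter (fun h => 0 < x h) with hs
  set q : H → ℝ := fun h => PH h * Real.exp (U h / τ) with hq
  have hqpos : ∀ h, 0 < q h := fun h => mul_pos (hPHpos h) (Real.exp_pos _)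
  have hxzero : ∀ h ∉ s, x h = 0 := by
    intro h hh
    simp only [hs, Finset.mem_filter, Finset.mem_univ, true_and, not_lt] at hh
    exact le_antisymm hh (hxnonneg h)
  have hxpos : ∀ h ∈ s, 0 < x h := by
    intro h hh
    simpa [hs] using hh
  have hxsum' : ∑ h ∈ s, x h = 1 := by
    rw [← hxsum]
    exact Finset.sum_subset (Finset.filter_subset _ _)
      (fun h _ hh => hxzero h hh)
  have hUsum : ∑ h, U h * x h = ∑ h ∈ s, U h * x h := by
    exact (Finset.sum_subset (Finset.filter_subset _ _)
      (fun h _ hh => by rw [hxzero h hh, mul_zero])).symm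
  set S' : ℝ := ∑ h ∈ s, q h with hS'
  set S : ℝ := ∑ h, q h with hSdef
  have hsne : s.Nonempty := by
    by_contra hc
    rw [Finset.not_nonempty_iff_eq_empty] at hc
    rw [hc, Finset.sum_empty] at hxsum'
    norm_num at hxsum'
  have hS'pos : 0 < S' := Finset.sum_pos (fun h _ => hqpos h) hsne
  have hSpos : 0 < S := Finset.sum_pos (fun h _ => hqpos h) Finset.univ_nonempty
  have hS'S : S' ≤ S :=
    Finset.sum_le_sum_of_subset_of_nonneg (Finset.filter_subset _ _)
      (fun h _ _ => (hqpos h).le)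
  -- rewrite LHS
  have hLHS : (∑ h, U h * x h) - τ * ∑ h ∈ s, x h * Real.log (x h / PH h)
      = τ * ∑ h ∈ s, x h * Real.log (q h / x h) := by
    rw [hUsum, Finset.mul_sum, Finset.mul_sum, ← Finset.sum_sub_distrib]
    apply Finset.sum_congr rfl
    intro h hh
    have hx := hxpos h hh
    have hP := hPHpos h
    rw [Real.log_div (hqpos h).ne' hx.ne', Real.log_div hx.ne' hP.ne',
      hq, Real.log_mul hP.ne' (Real.exp_pos _).ne', Real.log_exp]
    field_simp
    ring
  rw [hLHS]
  have key : ∑ h ∈ s, x h * Real.log (q h / x h) ≤ Real.log S' := by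
    have h1 : ∀ h ∈ s, x h * Real.log (q h / x h)
        ≤ (q h / S' - x h) + x h * Real.log S' := by
      intro h hh
      have hx := hxpos h hh
      have hpos : 0 < q h / (x h * S') := div_pos (hqpos h) (mul_pos hx hS'pos)
      have hlog := Real.log_le_sub_one_of_pos hpos
      have h2 : Real.log (q h / x h) = Real.log (q h / (x h * S')) + Real.log S' := by
        rw [← Real.log_mul (ne_of_gt hpos) hS'pos.ne']
        congr 1
        field_simp
      rw [h2, mul_add]
      have h3 : x h * Real.log (q h / (x h * S')) ≤ x h * (q h / (x h * S') - 1) :=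
        mul_le_mul_of_nonneg_left hlog hx.le
      have h4 : x h * (q h / (x h * S') - 1) = q h / S' - x h := by
        field_simp
      linarith
    calc ∑ h ∈ s, x h * Real.log (q h / x h)
        ≤ ∑ h ∈ s, ((q h / S' - x h) + x h * Real.log S') :=
          Finset.sum_le_sum h1
      _ = (∑ h ∈ s, q h) / S' - (∑ h ∈ s, x h)
            + (∑ h ∈ s, x h) * Real.log S' := by
          rw [Finset.sum_add_distrib, Finset.sum_sub_distrib, Finset.sum_div,
            ← Finset.sum_mul]
      _ = Real.log S' := by
          rw [hxsum', ← hS', div_self hS'pos.ne']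
          ring
  have hlogle : Real.log S' ≤ Real.log S := Real.log_le_log hS'pos hS'S
  have : ∑ h ∈ s, x h * Real.log (q h / x h) ≤ Real.log S := le_trans key hlogle
  exact mul_le_mul_of_nonneg_left this hτ.le
end

section
/- Suppose for each h ∈ H there exists α(h) > max_{r∈R} q(h,r) with ∑_{r∈R} λ(h)·P_R(h,r)/(α(h) − q(h,r)) = 1; define y*_h(r) = λ(h)·P_R(h,r)/(α(h) − q(h,r)), U(h) = α(h) − λ(h) − λ(h)·∑_{r∈R} P_R(h,r)·log((α(h) − q(h,r))/λ(h)), and x*(h) = P_H(h)·exp(U(h)/τ) / ∑_{h'∈H} P_H(h')·exp(U(h')/τ). Then for every probability mass function x on H and every family (z_h)_{h∈H} of probability mass functions on R with z_h(r) > 0 for all r, the hierarchically regularized objective satisfies ∑_{h∈H} x(h)·(∑_{r∈R} q(h,r)·z_h(r) − λ(h)·∑_{r∈R} P_R(h,r)·log(P_R(h,r)/z_h(r))) − τ·KL(x‖P_H) ≤ τ·log(∑_{h∈H} P_H(h)·exp(U(h)/τ)), with equality when x = x* and z_h = y*_h for all h. -/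
/-- With the rate-normalized inner optimizers `y*_h`, values `U(h)` and the
Gibbs outer optimizer `x*`, the hierarchically regularized objective is bounded by
`τ·log (∑ h, P_H(h)·exp(U(h)/τ))` over all `(x, (z_h))`, with equality at
`(x*, (y*_h))`. -/
theorem stmt7 {H R : Type*} [Fintype H] [Nonempty H] [Fintype R] [Nonempty R]
    (PH : H → ℝ) (hPHpos : ∀ h, 0 < PH h) (hPHsum : ∑ h, PH h = 1)
    (PR : H → R → ℝ) (hPRpos : ∀ h r, 0 < PR h r) (hPRsum : ∀ h, ∑ r, PR h r = 1)
    (q : H → R → ℝ) (lam : H → ℝ) (hlam : ∀ h, 0 < lam h)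
    (τ : ℝ) (hτ : 0 < τ)
    (KL : (H → ℝ) → ℝ)
    (hKL : ∀ x : H → ℝ,
      KL x = ∑ h ∈ Finset.univ.filter (fun h => 0 < x h),
               x h * Real.log (x h / PH h))
    (α : H → ℝ)
    (hαgt : ∀ h, Finset.univ.sup' Finset.univ_nonempty (q h) < α h)
    (hαsum : ∀ h, ∑ r, lam h * PR h r / (α h - q h r) = 1)
    (ystar : H → R → ℝ)
    (hystar : ∀ h r, ystar h r = lam h * PR h r / (α h - q h r))
    (U : H → ℝ)
    (hU : ∀ h, U h = α h - lam h
        - lam h * ∑ r, PR h r * Real.log ((α h - q h r) / lam h))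
    (xstar : H → ℝ)
    (hxstar : ∀ h, xstar h =
      PH h * Real.exp (U h / τ) / ∑ h', PH h' * Real.exp (U h' / τ)) :
    (∀ (x : H → ℝ) (z : H → R → ℝ),
      (∀ h, 0 ≤ x h) → (∑ h, x h = 1) →
      (∀ h r, 0 < z h r) → (∀ h, ∑ r, z h r = 1) →
      (∑ h, x h * ((∑ r, q h r * z h r)
          - lam h * ∑ r, PR h r * Real.log (PR h r / z h r))) - τ * KL x ≤
        τ * Real.log (∑ h, PH h * Real.exp (U h / τ))) ∧
    (∑ h, xstar h * ((∑ r, q h r * ystar h r)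
        - lam h * ∑ r, PR h r * Real.log (PR h r / ystar h r))) - τ * KL xstar =
      τ * Real.log (∑ h, PH h * Real.exp (U h / τ)) := by
  have hαq : ∀ h r, 0 < α h - q h r := by
    intro h r
    have h1 : q h r ≤ Finset.univ.sup' Finset.univ_nonempty (q h) :=
      Finset.le_sup' (q h) (Finset.mem_univ r)
    linarith [hαgt h]
  have hypos : ∀ h r, 0 < ystar h r := by
    intro h r
    rw [hystar]
    exact div_pos (mul_pos (hlam h) (hPRpos h r)) (hαq h r)
  have hysum : ∀ h, ∑ r, ystar h r = 1 := by
    intro h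
    simp only [hystar]
    exact hαsum h
  have key : ∀ h r, lam h * PR h r = ystar h r * (α h - q h r) := by
    intro h r
    rw [hystar, div_mul_cancel₀ _ (ne_of_gt (hαq h r))]
  -- rewrite of inner objective
  have e1 : ∀ h (z : R → ℝ), (∀ r, 0 < z r) →
      (∑ r, q h r * z r) - lam h * ∑ r, PR h r * Real.log (PR h r / z r)
      = (∑ r, (q h r * z r + lam h * PR h r * Real.log (z r)))
        - lam h * ∑ r, PR h r * Real.log (PR h r) := by
    intro h z hz
    rw [Finset.mul_sum, ← Finset.sum_sub_distrib, Finset.mul_sum, ← Finset.sum_sub_distrib]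
    refine Finset.sum_congr rfl fun r _ => ?_
    rw [Real.log_div (ne_of_gt (hPRpos h r)) (ne_of_gt (hz r))]
    ring
  -- inner equality
  have hinnerEq : ∀ h, (∑ r, q h r * ystar h r)
      - lam h * ∑ r, PR h r * Real.log (PR h r / ystar h r) = U h := by
    intro h
    have h2 : ∀ r, q h r * ystar h r = α h * ystar h r - lam h * PR h r := by
      intro r
      linear_combination key h r
    have hs1 : ∑ r, q h r * ystar h r = α h - lam h := by
      rw [Finset.sum_congr rfl (fun r _ => h2 r), Finset.sum_sub_distrib,
        ← Finset.mul_sum, ← Finset.mul_sum, hysum h, hPRsum h, mul_one, mul_one]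
    have hs2 : ∑ r, PR h r * Real.log (PR h r / ystar h r)
        = ∑ r, PR h r * Real.log ((α h - q h r) / lam h) := by
      refine Finset.sum_congr rfl fun r _ => ?_
      have hPne := (hPRpos h r).ne'
      have hlne := (hlam h).ne'
      have hane := (hαq h r).ne'
      have harg : PR h r / ystar h r = (α h - q h r) / lam h := by
        rw [hystar]
        field_simp
      rw [harg]
    rw [hs1, hs2, hU h]
  -- inner bound
  have hinnerLe : ∀ h (z : R → ℝ), (∀ r, 0 < z r) → (∑ r, z r = 1) →
      (∑ r, q h r * z r) - lam h * ∑ r, PR h r * Real.log (PR h r / z r) ≤ U h := by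
    intro h z hz hzs
    rw [← hinnerEq h, e1 h z hz, e1 h (ystar h) (hypos h)]
    have pt : ∀ r, q h r * z r + lam h * PR h r * Real.log (z r)
        ≤ q h r * ystar h r + lam h * PR h r * Real.log (ystar h r)
          + α h * (z r - ystar h r) := by
      intro r
      have hy := hypos h r
      have hlg : Real.log (z r) - Real.log (ystar h r) ≤ z r / ystar h r - 1 := by
        have := Real.log_le_sub_one_of_pos (div_pos (hz r) hy)
        rwa [Real.log_div (ne_of_gt (hz r)) (ne_of_gt hy)] at this
      have hk := key h r
      have h3 : lam h * PR h r * (z r / ystar h r - 1)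
          = (α h - q h r) * (z r - ystar h r) := by
        rw [hk]
        field_simp
      have h4 : lam h * PR h r * (Real.log (z r) - Real.log (ystar h r))
          ≤ (α h - q h r) * (z r - ystar h r) := by
        calc lam h * PR h r * (Real.log (z r) - Real.log (ystar h r))
            ≤ lam h * PR h r * (z r / ystar h r - 1) := by
              exact mul_le_mul_of_nonneg_left hlg
                (mul_pos (hlam h) (hPRpos h r)).le
          _ = (α h - q h r) * (z r - ystar h r) := h3
      have h5 : (α h - q h r) * (z r - ystar h r)
          = α h * (z r - ystar h r) - q h r * z r + q h r * ystar h r := by ring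
      have h6 : lam h * PR h r * (Real.log (z r) - Real.log (ystar h r))
          = lam h * PR h r * Real.log (z r) - lam h * PR h r * Real.log (ystar h r) := by
        ring
      linarith
    have hsum : ∑ r, (q h r * z r + lam h * PR h r * Real.log (z r))
        ≤ ∑ r, (q h r * ystar h r + lam h * PR h r * Real.log (ystar h r)
            + α h * (z r - ystar h r)) := Finset.sum_le_sum (fun r _ => pt r)
    rw [Finset.sum_add_distrib, Finset.sum_add_distrib, ← Finset.mul_sum,
      Finset.sum_sub_distrib, hzs, hysum h] at hsum
    rw [Finset.sum_add_distrib, Finset.sum_add_distrib]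
    simp only [sub_self, mul_zero, add_zero] at hsum
    rw [Finset.sum_add_distrib] at hsum
    linarith
  -- setup for outer
  set w : H → ℝ := fun h => PH h * Real.exp (U h / τ) with hw
  have hwpos : ∀ h, 0 < w h := fun h => mul_pos (hPHpos h) (Real.exp_pos _)
  set Z : ℝ := ∑ h, w h with hZ
  have hZpos : 0 < Z := Finset.sum_pos (fun h _ => hwpos h) Finset.univ_nonempty
  have hUw : ∀ h, U h = τ * (Real.log (w h) - Real.log (PH h)) := by
    intro h
    rw [hw]
    simp only
    rw [Real.log_mul (ne_of_gt (hPHpos h)) (ne_of_gt (Real.exp_pos _)), Real.log_exp]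
    field_simp
    ring
  -- outer bound
  have houter : ∀ x : H → ℝ, (∀ h, 0 ≤ x h) → (∑ h, x h = 1) →
      (∑ h, x h * U h) - τ * KL x ≤ τ * Real.log Z := by
    intro x hx hxs
    rw [hKL]
    set S := Finset.univ.filter (fun h => 0 < x h) with hS
    have hxS : ∑ h ∈ S, x h = 1 := by
      rw [← hxs]
      apply Finset.sum_filter_of_ne
      intro h _ hne
      exact lt_of_le_of_ne (hx h) (Ne.symm hne)
    have hxU : ∑ h ∈ S, x h * U h = ∑ h, x h * U h := by
      apply Finset.sum_filter_of_ne
      intro h _ hne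
      have : x h ≠ 0 := left_ne_zero_of_mul hne
      exact lt_of_le_of_ne (hx h) (Ne.symm this)
    have pt : ∀ h ∈ S, x h * Real.log (w h / (x h * Z)) ≤ w h / Z - x h := by
      intro h hSm
      have hxh : 0 < x h := (Finset.mem_filter.mp hSm).2
      have hwh := hwpos h
      have hpos : 0 < w h / (x h * Z) := by positivity
      have hle := Real.log_le_sub_one_of_pos hpos
      calc x h * Real.log (w h / (x h * Z))
          ≤ x h * (w h / (x h * Z) - 1) := mul_le_mul_of_nonneg_left hle hxh.le
        _ = w h / Z - x h := by field_simp
    have hsum := Finset.sum_le_sum pt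
    have hS1 : ∑ h ∈ S, (w h / Z - x h) ≤ 0 := by
      rw [Finset.sum_sub_distrib, hxS]
      have h1 : ∑ h ∈ S, w h / Z ≤ ∑ h, w h / Z :=
        Finset.sum_le_sum_of_subset_of_nonneg (Finset.filter_subset _ _)
          (fun h _ _ => (div_pos (hwpos h) hZpos).le)
      have h2 : ∑ h, w h / Z = 1 := by
        rw [← Finset.sum_div, ← hZ]
        field_simp
      linarith
    have e2 : ∀ h ∈ S, x h * U h - τ * (x h * Real.log (x h / PH h))
        = τ * (x h * Real.log (w h / (x h * Z))) + τ * x h * Real.log Z := by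
      intro h hSm
      have hxh : 0 < x h := (Finset.mem_filter.mp hSm).2
      rw [hUw h, Real.log_div (ne_of_gt (hwpos h)) (by positivity),
        Real.log_mul (ne_of_gt hxh) (ne_of_gt hZpos),
        Real.log_div (ne_of_gt hxh) (ne_of_gt (hPHpos h))]
      ring
    rw [← hxU, Finset.mul_sum, ← Finset.sum_sub_distrib,
      Finset.sum_congr rfl e2, Finset.sum_add_distrib]
    have t1 : ∑ h ∈ S, τ * (x h * Real.log (w h / (x h * Z))) ≤ 0 := by
      rw [← Finset.mul_sum]
      have := le_trans hsum hS1
      exact mul_nonpos_of_nonneg_of_nonpos hτ.le this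
    have t2 : ∑ h ∈ S, τ * x h * Real.log Z = τ * Real.log Z := by
      rw [Finset.sum_congr rfl (fun h _ => by ring :
        ∀ h ∈ S, τ * x h * Real.log Z = (τ * Real.log Z) * x h),
        ← Finset.mul_sum, hxS, mul_one]
    linarith
  -- xstar facts
  have hxseq : ∀ h, xstar h = w h / Z := by
    intro h
    rw [hxstar]
  have hxspos : ∀ h, 0 < xstar h := by
    intro h
    rw [hxseq]
    exact div_pos (hwpos h) hZpos
  have hxssum : ∑ h, xstar h = 1 := by
    rw [Finset.sum_congr rfl (fun h _ => hxseq h), ← Finset.sum_div, ← hZ]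
    field_simp
  -- outer equality
  have houterEq : (∑ h, xstar h * U h) - τ * KL xstar = τ * Real.log Z := by
    rw [hKL]
    have hfu : Finset.univ.filter (fun h => 0 < xstar h) = Finset.univ := by
      apply Finset.filter_true_of_mem
      intro h _
      exact hxspos h
    rw [hfu]
    have e3 : ∀ h, xstar h * Real.log (xstar h / PH h)
        = xstar h * (U h / τ) - xstar h * Real.log Z := by
      intro h
      rw [hxseq h]
      have hPne := (hPHpos h).ne'
      have hZne := hZpos.ne'
      have : w h / Z / PH h = Real.exp (U h / τ) / Z := by
        rw [hw]
        field_simp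
      rw [this, Real.log_div (ne_of_gt (Real.exp_pos _)) (ne_of_gt hZpos), Real.log_exp]
      ring
    rw [Finset.sum_congr rfl (fun h _ => e3 h), Finset.sum_sub_distrib]
    have t3 : ∑ h, xstar h * (U h / τ) = (∑ h, xstar h * U h) / τ := by
      rw [Finset.sum_div]
      exact Finset.sum_congr rfl (fun h _ => by ring)
    have t4 : ∑ h, xstar h * Real.log Z = Real.log Z := by
      rw [Finset.sum_congr rfl (fun h _ => by ring :
        ∀ h ∈ Finset.univ, xstar h * Real.log Z = Real.log Z * xstar h),
        ← Finset.mul_sum, hxssum, mul_one]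
    rw [t3, t4]
    field_simp
    ring
  constructor
  · intro x z hx hxs hz hzs
    have hmono : (∑ h, x h * ((∑ r, q h r * z h r)
        - lam h * ∑ r, PR h r * Real.log (PR h r / z h r))) ≤ ∑ h, x h * U h :=
      Finset.sum_le_sum fun h _ =>
        mul_le_mul_of_nonneg_left (hinnerLe h (z h) (hz h) (hzs h)) (hx h)
    have := houter x hx hxs
    linarith
  · have e4 : (∑ h, xstar h * ((∑ r, q h r * ystar h r)
        - lam h * ∑ r, PR h r * Real.log (PR h r / ystar h r)))
        = ∑ h, xstar h * U h :=
      Finset.sum_congr rfl fun h _ => by rw [hinnerEq h]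
    rw [e4]
    exact houterEq
end

section
/- FPFS slot allocation complies with the imposed entry rate: if the slot spacing is σ = 60/τ for a positive natural number τ, then for every real number a, the number of indices j ∈ {1,…,N} with assigned entry time ê_j ∈ [a, a + 60) is at most τ; that is, at most τ regulated flights enter the control volume in any rolling 60-minute window. -/
/-- FPFS slot allocation complies with the imposed hourly entry rate: with
slot spacing `σ = 60/τ` for a positive natural number `τ`, for every real `a` the number
of indices `j ∈ {1,…,N}` whose assigned entry time `ê_j = s_0 + m_j·σ` lies in
`[a, a + 60)` is at most `τ`. -/
theorem stmt14 (N : ℕ) (s0 : ℝ) (τ : ℕ) (hτ : 1 ≤ τ)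
    (σ : ℝ) (hσ : σ = 60 / (τ : ℝ))
    (e : ℕ → ℝ) (hmono : ∀ j k, 1 ≤ j → j ≤ k → k ≤ N → e j ≤ e k)
    (m : ℕ → ℤ) (hm0 : m 0 = -1)
    (hm : ∀ j, 1 ≤ j → j ≤ N → m j = max (m (j - 1) + 1) ⌈(e j - s0) / σ⌉) :
    ∀ a : ℝ,
      ((Finset.Icc 1 N).filter
        (fun j => s0 + (m j : ℝ) * σ ∈ Set.Ico a (a + 60))).card ≤ τ := by
  intro a
  have hτR : (0:ℝ) < τ := by exact_mod_cast hτ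
  have hσpos : 0 < σ := by rw [hσ]; positivity
  have hτσ : (τ : ℝ) * σ = 60 := by
    rw [hσ]; field_simp
  have hstep : ∀ j, 1 ≤ j → j ≤ N → m (j-1) < m j := by
    intro j hj hjN
    rw [hm j hj hjN]
    have := le_max_left (m (j-1) + 1) ⌈(e j - s0)/σ⌉
    omega
  have hmono' : ∀ j k, 1 ≤ j → j < k → k ≤ N → m j < m k := by
    intro j k hj hjk hkN
    induction k with
    | zero => omega
    | succ n ih =>
      rcases Nat.lt_or_ge j n with h | h
      · have h1 := hstep (n+1) (by omega) hkN
        have h2 := ih h (by omega)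
        have : n + 1 - 1 = n := by omega
        rw [this] at h1
        omega
      · have hjn : j = n := by omega
        subst hjn
        have h1 := hstep (j+1) (by omega) hkN
        have : j + 1 - 1 = j := by omega
        rw [this] at h1
        exact h1
  set c : ℤ := ⌈(a - s0)/σ⌉ with hc
  have hmaps : ∀ j ∈ (Finset.Icc 1 N).filter
      (fun j => s0 + (m j : ℝ) * σ ∈ Set.Ico a (a + 60)),
      m j ∈ Finset.Icc c (c + τ - 1) := by
    intro j hj
    simp only [Finset.mem_filter, Finset.mem_Icc, Set.mem_Ico] at hj
    obtain ⟨⟨-, -⟩, hlo, hhi⟩ := hj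
    have hlo' : (a - s0)/σ ≤ (m j : ℝ) := by
      rw [div_le_iff₀ hσpos]; linarith
    have h1 : c ≤ m j := by
      rw [hc, Int.ceil_le]; exact_mod_cast hlo'
    have hhi' : (m j : ℝ) < (a - s0)/σ + τ := by
      have h3 : ((m j : ℝ) - τ) * σ < a - s0 := by
        have : (m j : ℝ) * σ < (a - s0) + (τ:ℝ) * σ := by rw [hτσ]; linarith
        nlinarith
      have := (lt_div_iff₀ hσpos).mpr h3
      linarith
    have h2 : (m j : ℝ) < (c : ℝ) + τ := by
      have := Int.le_ceil ((a - s0)/σ)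
      rw [← hc] at this
      linarith
    have h2' : m j < c + τ := by exact_mod_cast h2
    simp only [Finset.mem_Icc]
    omega
  have hinj : Set.InjOn m ((Finset.Icc 1 N).filter
      (fun j => s0 + (m j : ℝ) * σ ∈ Set.Ico a (a + 60)) : Finset ℕ) := by
    intro x hx y hy hxy
    simp only [Finset.coe_filter, Set.mem_setOf_eq, Finset.mem_Icc] at hx hy
    by_contra hne
    rcases Nat.lt_or_ge x y with h | h
    · have := hmono' x y hx.1.1 h hy.1.2; omega
    · have hyx : y < x := by omega
      have := hmono' y x hy.1.1 hyx hx.1.2; omega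
  have := Finset.card_le_card_of_injOn m hmaps hinj
  have hcard : (Finset.Icc c (c + τ - 1)).card = τ := by
    rw [Int.card_Icc]; omega
  omega
end
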